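/- The function f : [0,1] → ℝ, f(u) = sqrt(r⁴ − u⁴) for u ≤ r and f(u) = 0 for u > r, is uniformly 1/2-Hölder on [0,1] with a constant independent of r ∈ (0,1]: |f(u) − f(v)| ≤ C·|u−v|^{1/2} for all u,v ∈ [0,1]. -/
import Mathlib

lemma sqrt_sub_sqrt_le (a b : ℝ) (hb : 0 ≤ b) (hab : b ≤ a) :
    Real.sqrt a - Real.sqrt b ≤ Real.sqrt (a - b) := by
  have h : Real.sqrt a ≤ Real.sqrt (a - b) + Real.sqrt b := by
    rw [← Real.sqrt_sq (by positivity : (0:ℝ) ≤ Real.sqrt (a-b) + Real.sqrt b)]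
    apply Real.sqrt_le_sqrt
    rw [add_sq, Real.sq_sqrt (by linarith), Real.sq_sqrt hb]
    nlinarith [Real.sqrt_nonneg (a-b), Real.sqrt_nonneg b]
  linarith

lemma abs_sqrt_sub_sqrt_le (a b : ℝ) (ha : 0 ≤ a) (hb : 0 ≤ b) :
    |Real.sqrt a - Real.sqrt b| ≤ Real.sqrt |a - b| := by
  rcases le_total b a with h | h
  · rw [abs_of_nonneg (by linarith : (0:ℝ) ≤ a - b),
      abs_of_nonneg (sub_nonneg.2 (Real.sqrt_le_sqrt h))]
    exact sqrt_sub_sqrt_le a b hb h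
  · rw [abs_of_nonpos (by linarith : a - b ≤ 0),
      abs_of_nonpos (sub_nonpos.2 (Real.sqrt_le_sqrt h)), neg_sub, neg_sub]
    exact sqrt_sub_sqrt_le b a ha h

/-- The function `f(u) = sqrt(max (r ^ 4 - u ^ 4) 0)` is uniformly 1/2-Hölder on `[0,1]`
with a constant independent of `r ∈ (0,1]`. -/
theorem sqrt_r4_sub_u4_holder :
    ∃ C : ℝ, 0 < C ∧ ∀ r : ℝ, 0 < r → r ≤ 1 →
      ∀ u v : ℝ, u ∈ Set.Icc (0 : ℝ) 1 → v ∈ Set.Icc (0 : ℝ) 1 →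
        |Real.sqrt (max (r ^ 4 - u ^ 4) 0) - Real.sqrt (max (r ^ 4 - v ^ 4) 0)|
          ≤ C * |u - v| ^ ((1 : ℝ) / 2) := by
  refine ⟨2, by norm_num, fun r hr hr1 u v hu hv => ?_⟩
  obtain ⟨hu0, hu1⟩ := hu
  obtain ⟨hv0, hv1⟩ := hv
  have key : |max (r ^ 4 - u ^ 4) 0 - max (r ^ 4 - v ^ 4) 0| ≤ 4 * |u - v| := by
    have h1 : |max (r ^ 4 - u ^ 4) 0 - max (r ^ 4 - v ^ 4) 0|
        ≤ |(r ^ 4 - u ^ 4) - (r ^ 4 - v ^ 4)| := abs_max_sub_max_le_abs _ _ _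
    have h2 : |(r ^ 4 - u ^ 4) - (r ^ 4 - v ^ 4)| = |v - u| * |v ^ 3 + v ^ 2 * u + v * u ^ 2 + u ^ 3| := by
      rw [← abs_mul]; ring_nf
    have h3 : |v ^ 3 + v ^ 2 * u + v * u ^ 2 + u ^ 3| ≤ 4 := by
      rw [abs_of_nonneg (by positivity)]
      nlinarith
    have h4 : |v - u| = |u - v| := abs_sub_comm v u
    calc |max (r ^ 4 - u ^ 4) 0 - max (r ^ 4 - v ^ 4) 0|
        ≤ |v - u| * |v ^ 3 + v ^ 2 * u + v * u ^ 2 + u ^ 3| := by rw [← h2]; exact h1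
      _ ≤ |v - u| * 4 := by
          exact mul_le_mul_of_nonneg_left h3 (abs_nonneg _)
      _ = 4 * |u - v| := by rw [h4]; ring
  calc |Real.sqrt (max (r ^ 4 - u ^ 4) 0) - Real.sqrt (max (r ^ 4 - v ^ 4) 0)|
      ≤ Real.sqrt |max (r ^ 4 - u ^ 4) 0 - max (r ^ 4 - v ^ 4) 0| :=
        abs_sqrt_sub_sqrt_le _ _ (le_max_right _ _) (le_max_right _ _)
    _ ≤ Real.sqrt (4 * |u - v|) := Real.sqrt_le_sqrt key
    _ = 2 * Real.sqrt |u - v| := by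
        rw [show (4 : ℝ) * |u - v| = 2 ^ 2 * |u - v| by norm_num,
          Real.sqrt_mul (by positivity), Real.sqrt_sq (by norm_num)]
    _ = 2 * |u - v| ^ ((1 : ℝ) / 2) := by
        rw [Real.sqrt_eq_rpow]
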